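/- For every integer k ≥ 1, with F(k) = ∫_0^1 e^{(u-1/2)²/(4k)}·u(1-u)/(k+u)^{3/2} du and Δ_{k+1} = ∫_0^1 u(1-u)e^{k+u}k!/(k+u)^{k+2} du, one has √(2π)·e^{1/(12k+1) - 1/(8k)}·F(k) ≤ Δ_{k+1} ≤ √(2π)·e^{1/(48k)}·F(k). -/

import Mathlib

open Real Filter Stirling


private lemma mono_aux {f f' : ℝ → ℝ} {a b : ℝ} (hab : a ≤ b)
    (hd : ∀ x ∈ Set.Icc a b, HasDerivAt f (f' x) x)
    (h0 : ∀ x ∈ Set.Icc a b, 0 ≤ f' x) : f a ≤ f b := by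
  have hmono : MonotoneOn f (Set.Icc a b) := by
    apply monotoneOn_of_deriv_nonneg (convex_Icc a b)
    · exact fun x hx => (hd x hx).continuousAt.continuousWithinAt
    · intro x hx
      rw [interior_Icc] at hx
      exact ((hd x (Set.mem_Icc_of_Ioo hx)).differentiableAt).differentiableWithinAt
    · intro x hx
      rw [interior_Icc] at hx
      rw [(hd x (Set.mem_Icc_of_Ioo hx)).deriv]
      exact h0 x (Set.mem_Icc_of_Ioo hx)
  exact hmono (Set.left_mem_Icc.mpr hab) (Set.right_mem_Icc.mpr hab) hab

private lemma anti_aux {f f' : ℝ → ℝ} {a b : ℝ} (hab : a ≤ b)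
    (hd : ∀ x ∈ Set.Icc a b, HasDerivAt f (f' x) x)
    (h0 : ∀ x ∈ Set.Icc a b, f' x ≤ 0) : f b ≤ f a := by
  have := mono_aux (f := fun x => -f x) (f' := fun x => -f' x) hab
    (fun x hx => (hd x hx).neg) (fun x hx => neg_nonneg.mpr (h0 x hx))
  simp only [neg_le_neg_iff] at this
  linarith

/-- cubic upper bound for log -/
private lemma log_ub {x : ℝ} (hx : -1 < x) : Real.log (1 + x) ≤ x - x^2/2 + x^3/3 := by
  set f : ℝ → ℝ := fun y => y - y^2/2 + y^3/3 - Real.log (1 + y) with hf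
  have hd : ∀ y : ℝ, -1 < y → HasDerivAt f (1 - y + y^2 - 1/(1+y)) y := by
    intro y hy
    have h1 : (0:ℝ) < 1 + y := by linarith
    have hlog : HasDerivAt (fun y : ℝ => Real.log (1 + y)) (1/(1+y)) y := by
      have := (Real.hasDerivAt_log h1.ne').comp y ((hasDerivAt_id y).const_add 1)
      simpa [Function.comp_def] using this
    have hp : HasDerivAt (fun y : ℝ => y - y^2/2 + y^3/3) (1 - y + y^2) y := by
      have h := (((hasDerivAt_id y).sub (((hasDerivAt_pow 2 y)).div_const 2)).add
        (((hasDerivAt_pow 3 y)).div_const 3))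
      refine h.congr_deriv ?_; norm_num
    exact hp.sub hlog
  have key : 0 ≤ f x := by
    rcases le_or_gt 0 x with h | h
    · have h0 : f 0 = 0 := by simp [hf]
      have := mono_aux (f := f) (f' := fun y => 1 - y + y^2 - 1/(1+y)) h
        (fun y hy => hd y (by linarith [hy.1])) ?_
      · linarith [h0 ▸ this]
      · intro y hy
        have h1 : (0:ℝ) < 1 + y := by linarith [hy.1]
        have : 1/(1+y) ≤ 1 - y + y^2 := by
          rw [div_le_iff₀ h1]; nlinarith [hy.1]
        linarith
    · have h0 : f 0 = 0 := by simp [hf]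
      have := anti_aux (f := f) (f' := fun y => 1 - y + y^2 - 1/(1+y)) h.le
        (fun y hy => hd y (by linarith [hy.1])) ?_
      · linarith [h0 ▸ this]
      · intro y hy
        have h1 : (0:ℝ) < 1 + y := by linarith [hy.1]
        have hy0 : y ≤ 0 := hy.2
        have : 1 - y + y^2 ≤ 1/(1+y) := by
          rw [le_div_iff₀ h1]; nlinarith
        linarith
  simp only [hf] at key; linarith

/-- lower bound log(1+x) ≥ 2x/(2+x) for x ≥ 0 -/
private lemma log_lb {x : ℝ} (hx : 0 ≤ x) : 2*x/(2+x) ≤ Real.log (1 + x) := by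
  set f : ℝ → ℝ := fun y => Real.log (1 + y) - 2*y/(2+y) with hf
  have key : f 0 ≤ f x := by
    apply mono_aux (f' := fun y => 1/(1+y) - 4/(2+y)^2) hx
    · intro y hy
      have h1 : (0:ℝ) < 1 + y := by linarith [hy.1]
      have h2 : (0:ℝ) < 2 + y := by linarith [hy.1]
      have hlog : HasDerivAt (fun y : ℝ => Real.log (1 + y)) (1/(1+y)) y := by
        have := (Real.hasDerivAt_log h1.ne').comp y ((hasDerivAt_id y).const_add 1)
        simpa [Function.comp_def] using this
      have hq : HasDerivAt (fun y : ℝ => 2*y/(2+y)) (4/(2+y)^2) y := by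
        have h := (((hasDerivAt_id y).const_mul 2).div ((hasDerivAt_id y).const_add 2) h2.ne')
        refine h.congr_deriv ?_
        simp only [id]
        ring
      exact hlog.sub hq
    · intro y hy
      have h1 : (0:ℝ) < 1 + y := by linarith [hy.1]
      have h2' : (0:ℝ) < 2 + y := by linarith [hy.1]
      have h2 : (0:ℝ) < (2 + y)^2 := by positivity
      rw [sub_nonneg, div_le_div_iff₀ h2 h1]
      nlinarith [sq_nonneg y]
  simp only [hf] at key
  simp at key
  linarith

/-- inequality (A) -/
lemma ineqA {K u : ℝ} (hK : 1 ≤ K) (hu0 : 0 ≤ u) (hu1 : u ≤ 1) :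
    u + u*(1-u)/(4*K) ≤ (K + 1/2) * (Real.log (K+u) - Real.log K) := by
  have hK0 : (0:ℝ) < K := by linarith
  have hKu : (0:ℝ) < K + u := by linarith
  have hlog : Real.log (K+u) - Real.log K = Real.log (1 + u/K) := by
    rw [← Real.log_div hKu.ne' hK0.ne']
    congr 1
    field_simp
  rw [hlog]
  have h1 := log_lb (x := u/K) (by positivity)
  have h2 : 2*(u/K)/(2+u/K) = 2*u/(2*K+u) := by
    rw [div_eq_div_iff (by positivity) (by positivity)]
    field_simp
  have h3 : u + u*(1-u)/(4*K) ≤ (K + 1/2) * (2*u/(2*K+u)) := by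
    rw [← sub_nonneg]
    have e : (K + 1/2) * (2*u/(2*K+u)) - (u + u*(1-u)/(4*K))
        = (u*(1-u)*(2*K-u)) / (4*K*(2*K+u)) := by
      field_simp
      ring
    rw [e]
    have : 0 ≤ u*(1-u)*(2*K-u) :=
      mul_nonneg (mul_nonneg hu0 (by linarith)) (by linarith)
    positivity
  calc u + u*(1-u)/(4*K) ≤ (K + 1/2) * (2*u/(2*K+u)) := h3
    _ = (K + 1/2) * (2*(u/K)/(2+u/K)) := by rw [h2]
    _ ≤ (K + 1/2) * Real.log (1 + u/K) := by
        apply mul_le_mul_of_nonneg_left h1 (by linarith)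

/-- inequality (B) -/
lemma ineqB {K u : ℝ} (hK : 1 ≤ K) (hu0 : 0 ≤ u) (hu1 : u ≤ 1) :
    (K + 1/2) * (Real.log (K+u) - Real.log K) ≤ u + u*(1-u)/(4*K) + 1/(16*K) := by
  have hK0 : (0:ℝ) < K := by linarith
  have hKu : (0:ℝ) < K + u := by linarith
  set c : ℝ := K + 1/2 with hc
  have hc0 : (0:ℝ) < c := by simp [hc]; linarith
  set v : ℝ := u - 1/2 with hv
  set x : ℝ := 1/(2*K) with hx
  have hx0 : (0:ℝ) < x := by positivity
  have hx2 : x ≤ 1/2 := by rw [hx]; rw [div_le_div_iff₀ (by linarith) (by norm_num)]; linarith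
  have hsplit : Real.log (K+u) - Real.log K = Real.log (1 + v/c) + Real.log (1 + x) := by
    have e1 : 1 + v/c = (K+u)/c := by field_simp [hc]; ring
    have e2 : 1 + x = c/K := by rw [hx, hc]; field_simp
    rw [e1, e2, Real.log_div hKu.ne' hc0.ne', Real.log_div hc0.ne' hK0.ne']
    ring
  rw [hsplit]
  have hw1 : (-1:ℝ) < v/c := by
    rw [lt_div_iff₀ hc0]
    simp [hv, hc]; nlinarith
  have h1 := log_ub hw1
  have h2 := log_ub (x := x) (by linarith)
  -- c * (v/c - (v/c)^2/2 + (v/c)^3/3) ≤ v - v^2/(4*K)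
  have key1 : c * (v/c - (v/c)^2/2 + (v/c)^3/3) ≤ v - v^2/(4*K) := by
    rw [← sub_nonneg]
    have e : v - v^2/(4*K) - c * (v/c - (v/c)^2/2 + (v/c)^3/3)
        = (v^2 * (3*c*(2*K-1) - 8*K*v)) / (24*K*c^2) := by
      field_simp
      ring
    rw [e]
    have hv2 : v ≤ 1/2 := by simp [hv]; linarith
    have : 0 ≤ 3*c*(2*K-1) - 8*K*v := by
      have hcc : c = K + 1/2 := hc
      rw [hcc]
      nlinarith [mul_le_mul_of_nonneg_left hv2 (show (0:ℝ) ≤ 8*K by linarith),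
        sq_nonneg (K-1)]
    positivity
  have key2 : c * (x - x^2/2 + x^3/3) ≤ 1/2 + 1/(8*K) := by
    rw [hx, hc, ← sub_nonneg]
    have e : 1/2 + 1/(8*K) - (K + 1/2) * (1/(2*K) - (1/(2*K))^2/2 + (1/(2*K))^3/3)
        = (K - 1) / (48*K^3) := by
      field_simp
      ring
    rw [e]
    have : (0:ℝ) ≤ K - 1 := by linarith
    positivity
  have hmul1 : c * Real.log (1 + v/c) ≤ c * (v/c - (v/c)^2/2 + (v/c)^3/3) :=
    mul_le_mul_of_nonneg_left h1 hc0.le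
  have hmul2 : c * Real.log (1 + x) ≤ c * (x - x^2/2 + x^3/3) :=
    mul_le_mul_of_nonneg_left h2 hc0.le
  have efin : u + u*(1-u)/(4*K) + 1/(16*K) = (v - v^2/(4*K)) + (1/2 + 1/(8*K)) := by
    rw [hv]; field_simp; ring
  rw [mul_add, efin]
  calc c * Real.log (1 + v/c) + c * Real.log (1 + x)
      ≤ c * (v/c - (v/c)^2/2 + (v/c)^3/3) + c * (x - x^2/2 + x^3/3) := by
        exact add_le_add hmul1 hmul2
    _ ≤ (v - v^2/(4*K)) + (1/2 + 1/(8*K)) := add_le_add key1 key2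


/-- lower bound on the successive difference -/
private lemma diff_lower (n : ℕ) :
    1/(3*(2*(n:ℝ)+3)^2) ≤ log (stirlingSeq (n + 1)) - log (stirlingSeq (n + 2)) := by
  have h := le_hasSum (log_stirlingSeq_diff_hasSum n) 0 (fun j _ => by positivity)
  refine le_trans (le_of_eq ?_) h
  push_cast
  field_simp
  ring

/-- upper bound on the successive difference -/
private lemma diff_upper (n : ℕ) :
    log (stirlingSeq (n + 1)) - log (stirlingSeq (n + 2)) ≤
      1/(12*((n:ℝ)+1)*((n:ℝ)+2)) := by
  set t : ℝ := (1 / (2 * ((n:ℝ) + 1) + 1)) ^ 2 with ht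
  have ht0 : 0 ≤ t := by positivity
  have ht1 : t < 1 := by
    rw [ht, one_div, inv_pow]
    exact inv_lt_one_of_one_lt₀ (one_lt_pow₀ (by push_cast; nlinarith [Nat.cast_nonneg (α := ℝ) n]) two_ne_zero)
  have hgeo : HasSum (fun k : ℕ => 1/3 * t ^ (k + 1)) (1/3 * (t / (1 - t))) := by
    have := (hasSum_geometric_of_lt_one ht0 ht1).mul_left t
    simp_rw [← _root_.pow_succ'] at this
    exact this.mul_left (1/3)
  have hle : log (stirlingSeq (n + 1)) - log (stirlingSeq (n + 2)) ≤ 1/3 * (t / (1 - t)) := by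
    refine hasSum_le ?_ (log_stirlingSeq_diff_hasSum n) hgeo
    intro k
    have h1 : (0:ℝ) < 2 * ((k:ℝ) + 1) + 1 := by positivity
    have : (1:ℝ) / (2 * (↑(k + 1) : ℝ) + 1) ≤ 1/3 := by
      push_cast
      rw [div_le_div_iff₀ h1 (by norm_num)]
      nlinarith [Nat.cast_nonneg (α := ℝ) k]
    calc (1:ℝ) / (2 * ↑(k + 1) + 1) * ((1 / (2 * ↑(n + 1) + 1)) ^ 2) ^ (k + 1)
        ≤ 1/3 * ((1 / (2 * ↑(n + 1) + 1)) ^ 2) ^ (k + 1) := by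
          apply mul_le_mul_of_nonneg_right this (by positivity)
      _ = 1/3 * t ^ (k+1) := by rw [ht]; push_cast; ring_nf
  refine hle.trans ?_
  have hN : (0:ℝ) ≤ (n:ℝ) := Nat.cast_nonneg n
  have e : t / (1 - t) = 1/(4*((n:ℝ)+1)*((n:ℝ)+2)) := by
    rw [ht]
    rw [div_eq_div_iff (by nlinarith) (by nlinarith)]
    field_simp
    ring
  rw [e, show (1:ℝ)/3 * (1/(4*((n:ℝ)+1)*((n:ℝ)+2))) = 1/(12*((n:ℝ)+1)*((n:ℝ)+2)) by
    field_simp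
    ring]

private lemma tendsto_logstirling :
    Tendsto (fun n : ℕ => log (stirlingSeq (n + 1))) atTop (nhds (log (Real.sqrt π))) := by
  have hpos : (0:ℝ) < Real.sqrt π := Real.sqrt_pos.mpr Real.pi_pos
  have h1 : Tendsto (fun n : ℕ => log (stirlingSeq n)) atTop (nhds (log (Real.sqrt π))) :=
    ((Real.continuousAt_log hpos.ne').tendsto).comp tendsto_stirlingSeq_sqrt_pi
  exact h1.comp (tendsto_add_atTop_nat 1)

private lemma tendsto_aux (a b : ℝ) (ha : 0 < a) :
    Tendsto (fun n : ℕ => 1/(a*((n:ℝ)+1)+b)) atTop (nhds 0) := by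
  have h : Tendsto (fun n : ℕ => a*((n:ℝ)+1)+b) atTop atTop := by
    apply tendsto_atTop_add_const_right
    apply Tendsto.const_mul_atTop ha
    exact tendsto_atTop_add_const_right _ _ tendsto_natCast_atTop_atTop
  have := h.inv_tendsto_atTop; simp only [one_div]; exact this

/-- Robbins upper bound -/
private lemma robbins_upper (n : ℕ) :
    log (stirlingSeq (n+1)) ≤ log (Real.sqrt π) + 1/(12*((n:ℝ)+1)) := by
  set E : ℕ → ℝ := fun m => log (stirlingSeq (m+1)) - 1/(12*((m:ℝ)+1)) with hE
  have hmono : Monotone E := by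
    apply monotone_nat_of_le_succ
    intro m
    have h := diff_upper m
    have hm : (0:ℝ) ≤ (m:ℝ) := Nat.cast_nonneg m
    have e : 1/(12*((m:ℝ)+1)) - 1/(12*((m:ℝ)+2)) = 1/(12*((m:ℝ)+1)*((m:ℝ)+2)) := by
      rw [div_sub_div _ _ (by positivity) (by positivity)]
      rw [div_eq_div_iff (by positivity) (by positivity)]
      ring
    simp only [hE]
    push_cast
    rw [show m+1+1 = m+2 from rfl, show (m:ℝ)+1+1 = (m:ℝ)+2 by ring]
    linarith
  have hlim : Tendsto E atTop (nhds (log (Real.sqrt π))) := by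
    have := tendsto_logstirling.sub (tendsto_aux 12 0 (by norm_num))
    simpa [hE] using this
  have := hmono.ge_of_tendsto hlim n
  simp only [hE] at this
  linarith

/-- Robbins lower bound -/
private lemma robbins_lower (n : ℕ) :
    log (Real.sqrt π) + 1/(12*((n:ℝ)+1)+1) ≤ log (stirlingSeq (n+1)) := by
  set C : ℕ → ℝ := fun m => log (stirlingSeq (m+1)) - 1/(12*((m:ℝ)+1)+1) with hC
  have hanti : Antitone C := by
    apply antitone_nat_of_succ_le
    intro m
    have h := diff_lower m
    have hm : (0:ℝ) ≤ (m:ℝ) := Nat.cast_nonneg m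
    have e : 1/(12*((m:ℝ)+1)+1) - 1/(12*((m:ℝ)+2)+1) ≤ 1/(3*(2*(m:ℝ)+3)^2) := by
      rw [div_sub_div _ _ (by positivity) (by positivity)]
      rw [div_le_div_iff₀ (by positivity) (by positivity)]
      nlinarith
    simp only [hC]
    push_cast
    rw [show m+1+1 = m+2 from rfl, show (m:ℝ)+1+1 = (m:ℝ)+2 by ring]
    linarith
  have hlim : Tendsto C atTop (nhds (log (Real.sqrt π))) := by
    have := tendsto_logstirling.sub (tendsto_aux 12 1 (by norm_num))
    simpa [hC] using this
  have := hanti.le_of_tendsto hlim n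
  simp only [hC] at this
  linarith

/-- Robbins bounds for stirlingSeq -/
lemma stirling_bounds (k : ℕ) (hk : 1 ≤ k) :
    Real.sqrt π * Real.exp (1/(12*(k:ℝ)+1)) ≤ stirlingSeq k ∧
    stirlingSeq k ≤ Real.sqrt π * Real.exp (1/(12*(k:ℝ))) := by
  obtain ⟨m, rfl⟩ : ∃ m, k = m + 1 := ⟨k - 1, by omega⟩
  have hpos : (0:ℝ) < stirlingSeq (m+1) := stirlingSeq'_pos m
  have hpi : (0:ℝ) < Real.sqrt π := Real.sqrt_pos.mpr Real.pi_pos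
  have hu := robbins_upper m
  have hl := robbins_lower m
  have hcast : ((m+1 : ℕ) : ℝ) = (m:ℝ) + 1 := by push_cast; ring
  constructor
  · rw [← Real.exp_log hpos, ← Real.exp_log hpi, ← Real.exp_add, Real.exp_le_exp, hcast]
    linarith
  · rw [← Real.exp_log hpos, ← Real.exp_log hpi, ← Real.exp_add, Real.exp_le_exp, hcast]
    linarith

theorem Delta_k_F_bounds (k : ℕ) (hk : 1 ≤ k) :
    Real.sqrt (2 * Real.pi) * Real.exp (1 / (12 * k + 1) - 1 / (8 * k)) *
        (∫ u in (0 : ℝ)..1,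
          Real.exp ((u - 1 / 2) ^ 2 / (4 * k)) * (u * (1 - u)) /
            ((k : ℝ) + u) ^ ((3 : ℝ) / 2))
      ≤ (∫ u in (0 : ℝ)..1,
          u * (1 - u) * Real.exp ((k : ℝ) + u) * (Nat.factorial k : ℝ) /
            ((k : ℝ) + u) ^ (k + 2)) ∧
    (∫ u in (0 : ℝ)..1,
        u * (1 - u) * Real.exp ((k : ℝ) + u) * (Nat.factorial k : ℝ) /
          ((k : ℝ) + u) ^ (k + 2))
      ≤ Real.sqrt (2 * Real.pi) * Real.exp (1 / (48 * k)) *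
          (∫ u in (0 : ℝ)..1,
            Real.exp ((u - 1 / 2) ^ 2 / (4 * k)) * (u * (1 - u)) /
              ((k : ℝ) + u) ^ ((3 : ℝ) / 2)) := by
  set K : ℝ := (k : ℝ) with hKdef
  have hK : (1:ℝ) ≤ K := by rw [hKdef]; exact_mod_cast hk
  have hK0 : (0:ℝ) < K := by linarith
  set S : ℝ := stirlingSeq k with hSdef
  have hS0 : (0:ℝ) < S := by
    obtain ⟨m, rfl⟩ : ∃ m, k = m + 1 := ⟨k - 1, by omega⟩
    exact stirlingSeq'_pos m
  obtain ⟨hSlo, hSup⟩ := stirling_bounds k hk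
  -- factorial formula
  have hfact : (Nat.factorial k : ℝ) = S * (Real.sqrt (2*K) * (K / Real.exp 1)^k) := by
    rw [hSdef, stirlingSeq, hKdef]
    field_simp
  -- exponential forms
  set G : ℝ → ℝ := fun u => (1/2)*Real.log K + K*Real.log K + u - (K+2)*Real.log (K+u) with hGdef
  set H : ℝ → ℝ := fun u => (u-1/2)^2/(4*K) - (3/2)*Real.log (K+u) with hHdef
  have hKu : ∀ u : ℝ, 0 ≤ u → (0:ℝ) < K + u := fun u hu => by linarith
  have e1 : ∀ u ∈ Set.Icc (0:ℝ) 1,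
      u * (1 - u) * Real.exp (K + u) * (Nat.factorial k : ℝ) / (K + u) ^ (k + 2)
      = u*(1-u) * (S * (Real.sqrt 2 * Real.exp (G u))) := by
    intro u hu
    have hA : (0:ℝ) < K + u := hKu u hu.1
    have eK : Real.sqrt K = Real.exp ((1/2) * Real.log K) := by
      rw [Real.sqrt_eq_rpow, Real.rpow_def_of_pos hK0]; ring_nf
    have epow : (K / Real.exp 1)^k = Real.exp (K * Real.log K - K) := by
      rw [← Real.exp_log (div_pos hK0 (Real.exp_pos 1)),
        Real.log_div hK0.ne' (Real.exp_pos 1).ne', Real.log_exp, ← Real.exp_nat_mul]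
      congr 1
      rw [hKdef]
      ring
    have eA : (K+u)^(k+2) = Real.exp ((K+2) * Real.log (K+u)) := by
      rw [← Real.exp_log (pow_pos hA (k+2)), Real.log_pow]
      congr 1
      push_cast [hKdef]
      ring
    rw [hfact, Real.sqrt_mul (by norm_num : (0:ℝ) ≤ 2), eK, epow, eA, hGdef]
    simp only [Real.exp_add, Real.exp_sub]
    field_simp
  have e2 : ∀ u ∈ Set.Icc (0:ℝ) 1,
      Real.exp ((u - 1/2) ^ 2 / (4 * K)) * (u * (1 - u)) / (K + u) ^ ((3:ℝ)/2)
      = u*(1-u) * Real.exp (H u) := by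
    intro u hu
    have hA : (0:ℝ) < K + u := hKu u hu.1
    rw [Real.rpow_def_of_pos hA, hHdef]
    simp only [Real.exp_sub]
    field_simp
  -- the scalar inequalities
  have hsqrt2pi : Real.sqrt (2*π) = Real.sqrt 2 * Real.sqrt π :=
    Real.sqrt_mul (by norm_num) π
  have key_up : ∀ u ∈ Set.Icc (0:ℝ) 1,
      S * (Real.sqrt 2 * Real.exp (G u)) ≤
      Real.sqrt (2*π) * Real.exp (1/(48*K)) * Real.exp (H u) := by
    intro u hu
    have hA := ineqA hK hu.1 hu.2
    have hz : (u-1/2)^2/(4*K) = 1/(16*K) - u*(1-u)/(4*K) := by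
      field_simp; ring
    have hexp : 1/(12*K) + G u ≤ 1/(48*K) + H u := by
      rw [hGdef, hHdef]
      simp only
      rw [hz]
      have h48 : 1/(12*K) = 1/(48*K) + 1/(16*K) := by field_simp; ring
      linarith [hA, h48]
    calc S * (Real.sqrt 2 * Real.exp (G u))
        ≤ (Real.sqrt π * Real.exp (1/(12*K))) * (Real.sqrt 2 * Real.exp (G u)) := by
          apply mul_le_mul_of_nonneg_right _ (by positivity)
          rw [hSdef, hKdef]; exact hSup
      _ = Real.sqrt 2 * Real.sqrt π * Real.exp (1/(12*K) + G u) := by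
          rw [Real.exp_add]; ring
      _ ≤ Real.sqrt 2 * Real.sqrt π * Real.exp (1/(48*K) + H u) := by
          apply mul_le_mul_of_nonneg_left (Real.exp_le_exp.mpr hexp) (by positivity)
      _ = Real.sqrt (2*π) * Real.exp (1/(48*K)) * Real.exp (H u) := by
          rw [hsqrt2pi, Real.exp_add]; ring
  have key_lo : ∀ u ∈ Set.Icc (0:ℝ) 1,
      Real.sqrt (2*π) * Real.exp (1/(12*K+1) - 1/(8*K)) * Real.exp (H u) ≤
      S * (Real.sqrt 2 * Real.exp (G u)) := by
    intro u hu
    have hB := ineqB hK hu.1 hu.2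
    have hz : (u-1/2)^2/(4*K) = 1/(16*K) - u*(1-u)/(4*K) := by
      field_simp; ring
    have hexp : (1/(12*K+1) - 1/(8*K)) + H u ≤ 1/(12*K+1) + G u := by
      rw [hGdef, hHdef]
      simp only
      rw [hz]
      have h8 : 1/(8*K) = 1/(16*K) + 1/(16*K) := by field_simp; ring
      linarith [hB, h8]
    calc Real.sqrt (2*π) * Real.exp (1/(12*K+1) - 1/(8*K)) * Real.exp (H u)
        = Real.sqrt 2 * Real.sqrt π * Real.exp ((1/(12*K+1) - 1/(8*K)) + H u) := by
          rw [hsqrt2pi, Real.exp_add]; ring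
      _ ≤ Real.sqrt 2 * Real.sqrt π * Real.exp (1/(12*K+1) + G u) := by
          apply mul_le_mul_of_nonneg_left (Real.exp_le_exp.mpr hexp) (by positivity)
      _ = (Real.sqrt π * Real.exp (1/(12*K+1))) * (Real.sqrt 2 * Real.exp (G u)) := by
          rw [Real.exp_add]; ring
      _ ≤ S * (Real.sqrt 2 * Real.exp (G u)) := by
          apply mul_le_mul_of_nonneg_right _ (by positivity)
          rw [hSdef, hKdef]; exact hSlo
  -- pointwise bounds on the integrands
  have point_up : ∀ u ∈ Set.Icc (0:ℝ) 1,
      u * (1 - u) * Real.exp (K + u) * (Nat.factorial k : ℝ) / (K + u) ^ (k + 2)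
      ≤ Real.sqrt (2*π) * Real.exp (1/(48*K)) *
        (Real.exp ((u - 1/2) ^ 2 / (4 * K)) * (u * (1 - u)) / (K + u) ^ ((3:ℝ)/2)) := by
    intro u hu
    rw [e1 u hu, e2 u hu, mul_comm (Real.sqrt (2*π) * Real.exp (1/(48*K)))
      (u*(1-u) * Real.exp (H u)), mul_assoc (u*(1-u))]
    have huu : 0 ≤ u * (1-u) := mul_nonneg hu.1 (by linarith [hu.2])
    exact mul_le_mul_of_nonneg_left
      (by simpa [mul_comm, mul_assoc] using key_up u hu) huu
  have point_lo : ∀ u ∈ Set.Icc (0:ℝ) 1,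
      Real.sqrt (2*π) * Real.exp (1/(12*K+1) - 1/(8*K)) *
        (Real.exp ((u - 1/2) ^ 2 / (4 * K)) * (u * (1 - u)) / (K + u) ^ ((3:ℝ)/2))
      ≤ u * (1 - u) * Real.exp (K + u) * (Nat.factorial k : ℝ) / (K + u) ^ (k + 2) := by
    intro u hu
    rw [e1 u hu, e2 u hu, mul_comm (Real.sqrt (2*π) * Real.exp (1/(12*K+1) - 1/(8*K)))
      (u*(1-u) * Real.exp (H u)), mul_assoc (u*(1-u))]
    have huu : 0 ≤ u * (1-u) := mul_nonneg hu.1 (by linarith [hu.2])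
    exact mul_le_mul_of_nonneg_left
      (by simpa [mul_comm, mul_assoc] using key_lo u hu) huu
  -- integrability
  have hcont1 : ContinuousOn
      (fun u : ℝ => u * (1 - u) * Real.exp (K + u) * (Nat.factorial k : ℝ) / (K + u) ^ (k + 2))
      (Set.uIcc (0:ℝ) 1) := by
    apply ContinuousOn.div
    · exact (Continuous.continuousOn (by fun_prop))
    · exact (Continuous.continuousOn (by fun_prop))
    · intro x hx
      rw [Set.uIcc_of_le (by norm_num : (0:ℝ) ≤ 1)] at hx
      exact pow_ne_zero _ (hKu x hx.1).ne'
  have hcont2 : ContinuousOn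
      (fun u : ℝ => Real.exp ((u - 1/2) ^ 2 / (4 * K)) * (u * (1 - u)) / (K + u) ^ ((3:ℝ)/2))
      (Set.uIcc (0:ℝ) 1) := by
    apply ContinuousOn.div
    · exact (Continuous.continuousOn (by fun_prop))
    · apply ContinuousOn.rpow_const
      · exact (Continuous.continuousOn (by fun_prop))
      · intro x hx
        rw [Set.uIcc_of_le (by norm_num : (0:ℝ) ≤ 1)] at hx
        exact Or.inl (hKu x hx.1).ne'
    · intro x hx
      rw [Set.uIcc_of_le (by norm_num : (0:ℝ) ≤ 1)] at hx
      exact (Real.rpow_pos_of_pos (hKu x hx.1) _).ne'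
  have hint1 := hcont1.intervalIntegrable (μ := MeasureTheory.volume)
  have hint2 := hcont2.intervalIntegrable (μ := MeasureTheory.volume)
  -- final assembly
  have cast1 : (1:ℝ) / (12 * (k:ℝ) + 1) - 1 / (8 * (k:ℝ)) = 1/(12*K+1) - 1/(8*K) := by
    rw [hKdef]
  have cast2 : (1:ℝ) / (48 * (k:ℝ)) = 1/(48*K) := by rw [hKdef]
  constructor
  · rw [cast1]
    have hmono := intervalIntegral.integral_mono_on (μ := MeasureTheory.volume)
      (by norm_num : (0:ℝ) ≤ 1)
      (hint2.const_mul (Real.sqrt (2*π) * Real.exp (1/(12*K+1) - 1/(8*K)))) hint1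
      (fun x hx => by
        simpa [mul_assoc] using point_lo x hx)
    rw [intervalIntegral.integral_const_mul] at hmono
    exact hmono
  · rw [cast2]
    have hmono := intervalIntegral.integral_mono_on (μ := MeasureTheory.volume)
      (by norm_num : (0:ℝ) ≤ 1) hint1
      (hint2.const_mul (Real.sqrt (2*π) * Real.exp (1/(48*K))))
      (fun x hx => by
        simpa [mul_assoc] using point_up x hx)
    rw [intervalIntegral.integral_const_mul] at hmono
    exact hmono
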